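/- (First claim of Proposition 1.) Let 0 < q < 1, s ≥ 1, and N = 2^s. Then (p̄_s(q)/N) · (H₁^s(q) − H₀^s(q)) = (p̄_s(q)/N) · ∑_{i=0}^{s−1} { ∏_{j=1}^{i} (1 − 2q̄_{s−j+1}(q)) } · (1 − h(q̄_{s−i}(q))) =: f(q). That is, the first-round rate term of the polarization-based OT protocol with block length N admits the stated closed form. -/

import Mathlib

open Finset

/-- Hamming weight of a binary string `e ∈ {0,1}^n`. -/
def wt {n : ℕ} (e : Fin n → Bool) : ℕ := (Finset.univ.filter fun i => e i = true).card

/-- i.i.d. Bernoulli(q) probability of the binary string `e ∈ {0,1}^n`. -/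
noncomputable def Pq (q : ℝ) {n : ℕ} (e : Fin n → Bool) : ℝ :=
  q ^ wt e * (1 - q) ^ (n - wt e)

/-- `p̄_j(q) = (1 − (1−2q)^{2^j})/2`. -/
noncomputable def pbar (q : ℝ) (j : ℕ) : ℝ := (1 - (1 - 2 * q) ^ (2 ^ j)) / 2

/-- `q̄_j(q) = p̄_{j−1}(q)²/(1 − p̄_j(q))`. -/
noncomputable def qbar (q : ℝ) (j : ℕ) : ℝ := (pbar q (j - 1)) ^ 2 / (1 - pbar q j)

/-- Binary entropy function (base 2), with `h(0) = h(1) = 0`. -/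
noncomputable def binEnt (x : ℝ) : ℝ := -(x * Real.logb 2 x) - (1 - x) * Real.logb 2 (1 - x)

/-- `Π_b^j(q)`: probability that an i.i.d. Bernoulli(q) vector of length `2^j` has parity `b`. -/
noncomputable def Pib (q : ℝ) (j : ℕ) (b : ℕ) : ℝ := if b = 1 then pbar q j else 1 - pbar q j

/-- `H_b^j(q)`: Shannon entropy (base 2) of an i.i.d. Bernoulli(q) vector of length `2^j`
conditioned on its parity being `b`. -/
noncomputable def Hcond (q : ℝ) (j : ℕ) (b : ℕ) : ℝ :=
  -∑ e ∈ Finset.univ.filter (fun e : Fin (2 ^ j) → Bool => wt e % 2 = b),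
      (Pq q e / Pib q j b) * Real.logb 2 (Pq q e / Pib q j b)

lemma wt_le {n : ℕ} (e : Fin n → Bool) : wt e ≤ n := by
  simpa [wt] using Finset.card_filter_le Finset.univ (fun i => e i = true)

lemma wt_cons {n : ℕ} (b : Bool) (e : Fin n → Bool) :
    wt (Fin.cons b e) = (if b then 1 else 0) + wt e := by
  unfold wt
  rw [Finset.card_filter, Finset.card_filter, Fin.sum_univ_succ]
  simp [Fin.cons_zero, Fin.cons_succ]

lemma Pq_cons (q : ℝ) {n : ℕ} (b : Bool) (e : Fin n → Bool) :
    Pq q (Fin.cons b e) = (if b then q else 1 - q) * Pq q e := by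
  unfold Pq
  rw [wt_cons]
  have hw := wt_le e
  cases b with
  | false =>
      simp only [if_neg, Bool.false_eq_true, if_false]
      have : n + 1 - wt e = (n - wt e) + 1 := by omega
      rw [zero_add, this, pow_succ]
      ring
  | true =>
      simp only [if_pos]
      have : n + 1 - (1 + wt e) = n - wt e := by omega
      rw [this, pow_add, pow_one]
      ring

lemma sum_cons_split {n : ℕ} (F : (Fin (n + 1) → Bool) → ℝ) :
    ∑ e : Fin (n + 1) → Bool, F e
      = ∑ b : Bool, ∑ e : Fin n → Bool, F (Fin.cons b e) := by
  calc ∑ e : Fin (n + 1) → Bool, F e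
      = ∑ p : Bool × (Fin n → Bool), F (Fin.cons p.1 p.2) :=
        Fintype.sum_equiv (Fin.consEquiv (fun _ => Bool)).symm _ _ (fun x => by
          simp [Fin.consEquiv])
    _ = ∑ b : Bool, ∑ e : Fin n → Bool, F (Fin.cons b e) := Fintype.sum_prod_type _

lemma sum_Pq (q : ℝ) (n : ℕ) : ∑ e : Fin n → Bool, Pq q e = 1 := by
  induction n with
  | zero => simp [Pq, wt]
  | succ n ih =>
      rw [sum_cons_split]
      simp only [Pq_cons, ← Finset.mul_sum, ih]
      simp [Fintype.sum_bool]

lemma sum_sgn_Pq (q : ℝ) (n : ℕ) :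
    ∑ e : Fin n → Bool, (-1 : ℝ) ^ wt e * Pq q e = (1 - 2 * q) ^ n := by
  induction n with
  | zero => simp [Pq, wt]
  | succ n ih =>
      rw [sum_cons_split]
      rw [Fintype.sum_bool]
      have h1 : ∑ e : Fin n → Bool, (-1:ℝ) ^ wt (Fin.cons true e) * Pq q (Fin.cons true e)
          = -q * (1 - 2*q)^n := by
        calc ∑ e : Fin n → Bool, (-1:ℝ) ^ wt (Fin.cons true e) * Pq q (Fin.cons true e)
            = ∑ e : Fin n → Bool, (-q) * ((-1:ℝ) ^ wt e * Pq q e) :=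
              Finset.sum_congr rfl (fun e _ => by
                rw [wt_cons, Pq_cons]; simp [pow_add]; ring)
          _ = -q * ∑ e : Fin n → Bool, (-1:ℝ) ^ wt e * Pq q e := by
              rw [Finset.mul_sum]
          _ = -q * (1 - 2*q)^n := by rw [ih]
      have h2 : ∑ e : Fin n → Bool, (-1:ℝ) ^ wt (Fin.cons false e) * Pq q (Fin.cons false e)
          = (1-q) * (1 - 2*q)^n := by
        calc ∑ e : Fin n → Bool, (-1:ℝ) ^ wt (Fin.cons false e) * Pq q (Fin.cons false e)
            = ∑ e : Fin n → Bool, (1-q) * ((-1:ℝ) ^ wt e * Pq q e) :=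
              Finset.sum_congr rfl (fun e _ => by
                rw [wt_cons, Pq_cons]; simp [pow_add]; ring)
          _ = (1-q) * ∑ e : Fin n → Bool, (-1:ℝ) ^ wt e * Pq q e := by
              rw [Finset.mul_sum]
          _ = (1-q) * (1 - 2*q)^n := by rw [ih]
      rw [h1, h2, pow_succ]
      ring

lemma Pq_pos {q : ℝ} (hq0 : 0 < q) (hq1 : q < 1) {n : ℕ} (e : Fin n → Bool) :
    0 < Pq q e := by
  unfold Pq
  have h : 0 < 1 - q := by linarith
  exact mul_pos (pow_pos hq0 _) (pow_pos h _)

lemma logb_Pq_cons {q : ℝ} (hq0 : 0 < q) (hq1 : q < 1) {n : ℕ} (b : Bool) (e : Fin n → Bool) :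
    Real.logb 2 (Pq q (Fin.cons b e))
      = Real.logb 2 (if b then q else 1 - q) + Real.logb 2 (Pq q e) := by
  rw [Pq_cons, Real.logb_mul]
  · cases b <;> simp <;> [linarith; linarith]
  · exact (Pq_pos hq0 hq1 e).ne'

lemma sum_PlogP {q : ℝ} (hq0 : 0 < q) (hq1 : q < 1) (n : ℕ) :
    ∑ e : Fin n → Bool, Pq q e * Real.logb 2 (Pq q e)
      = n * (q * Real.logb 2 q + (1 - q) * Real.logb 2 (1 - q)) := by
  induction n with
  | zero => simp [Pq, wt]
  | succ n ih =>
      rw [sum_cons_split, Fintype.sum_bool]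
      have h : ∀ (b : Bool), ∑ e : Fin n → Bool,
          Pq q (Fin.cons b e) * Real.logb 2 (Pq q (Fin.cons b e))
          = (if b then q else 1-q) * Real.logb 2 (if b then q else 1-q)
            + (if b then q else 1-q) * (n * (q * Real.logb 2 q + (1 - q) * Real.logb 2 (1 - q))) := by
        intro b
        calc ∑ e : Fin n → Bool, Pq q (Fin.cons b e) * Real.logb 2 (Pq q (Fin.cons b e))
            = ∑ e : Fin n → Bool, ((if b then q else 1-q) * Real.logb 2 (if b then q else 1-q) * Pq q e
                + (if b then q else 1-q) * (Pq q e * Real.logb 2 (Pq q e))) :=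
              Finset.sum_congr rfl (fun e _ => by
                rw [logb_Pq_cons hq0 hq1, Pq_cons]; ring)
          _ = (if b then q else 1-q) * Real.logb 2 (if b then q else 1-q) * (∑ e : Fin n → Bool, Pq q e)
                + (if b then q else 1-q) * ∑ e : Fin n → Bool, Pq q e * Real.logb 2 (Pq q e) := by
              rw [Finset.sum_add_distrib, Finset.mul_sum, Finset.mul_sum]
          _ = _ := by rw [sum_Pq, ih]; ring
      rw [h true, h false]
      push_cast
      simp only [if_pos, if_neg, Bool.false_eq_true, if_false, if_true]
      ring

lemma sum_sgn_PlogP {q : ℝ} (hq0 : 0 < q) (hq1 : q < 1) (n : ℕ) :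
    ∑ e : Fin n → Bool, (-1:ℝ) ^ wt e * (Pq q e * Real.logb 2 (Pq q e))
      = n * ((1 - q) * Real.logb 2 (1 - q) - q * Real.logb 2 q) * (1 - 2*q) ^ (n - 1) := by
  induction n with
  | zero => simp [Pq, wt]
  | succ n ih =>
      rw [sum_cons_split, Fintype.sum_bool]
      have h : ∀ (b : Bool), ∑ e : Fin n → Bool,
          (-1:ℝ) ^ wt (Fin.cons b e) * (Pq q (Fin.cons b e) * Real.logb 2 (Pq q (Fin.cons b e)))
          = (if b then (-1:ℝ) else 1) * ((if b then q else 1-q) * Real.logb 2 (if b then q else 1-q) * (1-2*q)^n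
            + (if b then q else 1-q) * (n * ((1 - q) * Real.logb 2 (1 - q) - q * Real.logb 2 q) * (1 - 2*q) ^ (n - 1))) := by
        intro b
        calc ∑ e : Fin n → Bool,
            (-1:ℝ) ^ wt (Fin.cons b e) * (Pq q (Fin.cons b e) * Real.logb 2 (Pq q (Fin.cons b e)))
            = ∑ e : Fin n → Bool, (if b then (-1:ℝ) else 1) *
                ((if b then q else 1-q) * Real.logb 2 (if b then q else 1-q) * ((-1:ℝ)^ wt e * Pq q e)
                + (if b then q else 1-q) * ((-1:ℝ)^ wt e * (Pq q e * Real.logb 2 (Pq q e)))) :=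
              Finset.sum_congr rfl (fun e _ => by
                rw [wt_cons, logb_Pq_cons hq0 hq1, Pq_cons, pow_add]
                cases b <;> simp <;> ring)
          _ = (if b then (-1:ℝ) else 1) *
                ((if b then q else 1-q) * Real.logb 2 (if b then q else 1-q) * (∑ e : Fin n → Bool, (-1:ℝ)^ wt e * Pq q e)
                + (if b then q else 1-q) * ∑ e : Fin n → Bool, (-1:ℝ)^ wt e * (Pq q e * Real.logb 2 (Pq q e))) := by
              rw [← Finset.mul_sum, Finset.sum_add_distrib, Finset.mul_sum, Finset.mul_sum]
          _ = _ := by rw [sum_sgn_Pq, ih]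
      rw [h true, h false]
      simp only [if_pos, if_neg, Bool.false_eq_true, if_false, if_true]
      rcases Nat.eq_zero_or_pos n with hn | hn
      · subst hn; push_cast; simp; ring
      · have h1 : n - 1 + 1 = n := by omega
        have h2 : (1-2*q)^n = (1-2*q)^(n-1) * (1-2*q) := by
          rw [← pow_succ, h1]
        have h3 : (n + 1 : ℕ) - 1 = n := by omega
        rw [h3, h2]
        push_cast
        ring


/-- closed-form unnormalized entropy sums -/
noncomputable def SS (q : ℝ) (s : ℕ) (b : ℕ) : ℝ :=
  ((2:ℝ)^s * (q * Real.logb 2 q + (1 - q) * Real.logb 2 (1 - q))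
    + (if b = 1 then -1 else 1) * ((2:ℝ)^s * ((1 - q) * Real.logb 2 (1 - q) - q * Real.logb 2 q)
        * (1 - 2*q) ^ (2^s - 1))) / 2

lemma rho_lt_one {q : ℝ} (hq0 : 0 < q) (hq1 : q < 1) (n : ℕ) (hn : 1 ≤ n) :
    |(1 - 2*q) ^ n| < 1 := by
  rw [abs_pow]
  calc |1 - 2*q| ^ n ≤ |1 - 2*q| ^ 1 :=
        pow_le_pow_of_le_one (abs_nonneg _) (by rw [abs_le]; constructor <;> linarith) hn
    _ < 1 := by rw [pow_one, abs_lt]; constructor <;> linarith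

lemma pbar_pos {q : ℝ} (hq0 : 0 < q) (hq1 : q < 1) (s : ℕ) : 0 < pbar q s := by
  have h := rho_lt_one hq0 hq1 (2^s) Nat.one_le_two_pow
  rw [abs_lt] at h
  unfold pbar; linarith [h.2]

lemma pbar_lt_one {q : ℝ} (hq0 : 0 < q) (hq1 : q < 1) (s : ℕ) : pbar q s < 1 := by
  have h := rho_lt_one hq0 hq1 (2^s) Nat.one_le_two_pow
  rw [abs_lt] at h
  unfold pbar; linarith [h.1]

/-- parity-filtered sums of a function, as linear combinations of total and signed sums -/
lemma parity_add {n : ℕ} (G : (Fin n → Bool) → ℝ) :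
    (∑ e ∈ Finset.univ.filter (fun e : Fin n → Bool => wt e % 2 = 0), G e)
      + (∑ e ∈ Finset.univ.filter (fun e : Fin n → Bool => wt e % 2 = 1), G e)
    = ∑ e : Fin n → Bool, G e := by
  rw [add_comm, ← Finset.sum_filter_add_sum_filter_not Finset.univ
      (fun e : Fin n → Bool => wt e % 2 = 1) G]
  congr 1
  apply Finset.sum_congr _ (fun _ _ => rfl)
  apply Finset.filter_congr
  intro e _
  simp [Nat.mod_two_ne_one]

lemma parity_sub {n : ℕ} (G : (Fin n → Bool) → ℝ) :
    (∑ e ∈ Finset.univ.filter (fun e : Fin n → Bool => wt e % 2 = 0), G e)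
      - (∑ e ∈ Finset.univ.filter (fun e : Fin n → Bool => wt e % 2 = 1), G e)
    = ∑ e : Fin n → Bool, (-1:ℝ) ^ wt e * G e := by
  rw [← Finset.sum_filter_add_sum_filter_not Finset.univ
      (fun e : Fin n → Bool => wt e % 2 = 1) (fun e => (-1:ℝ) ^ wt e * G e)]
  have h1 : ∑ e ∈ Finset.univ.filter (fun e : Fin n → Bool => wt e % 2 = 1),
      (-1:ℝ) ^ wt e * G e
      = -∑ e ∈ Finset.univ.filter (fun e : Fin n → Bool => wt e % 2 = 1), G e := by
    rw [← Finset.sum_neg_distrib]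
    apply Finset.sum_congr rfl
    intro e he
    rw [Finset.mem_filter] at he
    rw [Odd.neg_one_pow (Nat.odd_iff.2 he.2)]
    ring
  have h0 : ∑ e ∈ Finset.univ.filter (fun e : Fin n → Bool => ¬ wt e % 2 = 1),
      (-1:ℝ) ^ wt e * G e
      = ∑ e ∈ Finset.univ.filter (fun e : Fin n → Bool => wt e % 2 = 0), G e := by
    have hset : Finset.univ.filter (fun e : Fin n → Bool => ¬ wt e % 2 = 1)
        = Finset.univ.filter (fun e : Fin n → Bool => wt e % 2 = 0) := by
      ext e; simp [Nat.mod_two_ne_one]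
    rw [hset]
    apply Finset.sum_congr rfl
    intro e he
    rw [Finset.mem_filter] at he
    rw [Even.neg_one_pow (Nat.even_iff.2 he.2)]
    ring
  rw [h1, h0]
  ring

lemma sum_parity_Pq {q : ℝ} (hq0 : 0 < q) (hq1 : q < 1) (s : ℕ) (b : ℕ) (hb : b = 0 ∨ b = 1) :
    ∑ e ∈ Finset.univ.filter (fun e : Fin (2^s) → Bool => wt e % 2 = b), Pq q e
      = Pib q s b := by
  have hadd := parity_add (fun e : Fin (2^s) → Bool => Pq q e)
  have hsub := parity_sub (fun e : Fin (2^s) → Bool => Pq q e)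
  rw [sum_Pq] at hadd
  rw [sum_sgn_Pq] at hsub
  rcases hb with hb | hb <;> subst hb <;> simp only [Pib, pbar, if_pos, if_neg,
    Nat.zero_ne_one, if_false, if_true] <;> linarith

lemma sum_parity_PlogP {q : ℝ} (hq0 : 0 < q) (hq1 : q < 1) (s : ℕ) (b : ℕ) (hb : b = 0 ∨ b = 1) :
    ∑ e ∈ Finset.univ.filter (fun e : Fin (2^s) → Bool => wt e % 2 = b),
        Pq q e * Real.logb 2 (Pq q e)
      = SS q s b := by
  have hadd := parity_add (fun e : Fin (2^s) → Bool => Pq q e * Real.logb 2 (Pq q e))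
  have hsub := parity_sub (fun e : Fin (2^s) → Bool => Pq q e * Real.logb 2 (Pq q e))
  rw [sum_PlogP hq0 hq1] at hadd
  rw [sum_sgn_PlogP hq0 hq1] at hsub
  have hcast : ((2^s : ℕ) : ℝ) = (2:ℝ)^s := by push_cast; ring
  rw [hcast] at hadd hsub
  rcases hb with hb | hb <;> subst hb <;> simp only [SS, if_pos, if_neg,
    Nat.zero_ne_one, if_false, if_true] <;> linarith

lemma Hcond_eq {q : ℝ} (hq0 : 0 < q) (hq1 : q < 1) (s : ℕ) (b : ℕ) (hb : b = 0 ∨ b = 1) :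
    Hcond q s b = -(SS q s b) / Pib q s b + Real.logb 2 (Pib q s b) := by
  have hPib : 0 < Pib q s b := by
    unfold Pib
    split
    · exact pbar_pos hq0 hq1 s
    · linarith [pbar_lt_one hq0 hq1 s]
  unfold Hcond
  have hexp : ∀ e : Fin (2^s) → Bool,
      (Pq q e / Pib q s b) * Real.logb 2 (Pq q e / Pib q s b)
      = (Pq q e * Real.logb 2 (Pq q e)) / Pib q s b
        - (Real.logb 2 (Pib q s b) / Pib q s b) * Pq q e := by
    intro e
    rw [Real.logb_div (Pq_pos hq0 hq1 e).ne' hPib.ne']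
    field_simp
  rw [Finset.sum_congr rfl (fun e _ => hexp e), Finset.sum_sub_distrib,
      ← Finset.sum_div, ← Finset.mul_sum, sum_parity_PlogP hq0 hq1 s b hb,
      sum_parity_Pq hq0 hq1 s b hb]
  field_simp
  ring

/-- The key one-step entropy identity. -/
lemma step_identity (a S0 S1 : ℝ) (ha0 : 0 < a) (ha1 : a < 1) :
    -(2*(S1*(1-a)+S0*a)) / (2*(a*(1-a))) + (2*(S0*(1-a)+S1*a)) / (a^2+(1-a)^2)
      + Real.logb 2 (2*(a*(1-a))) - Real.logb 2 (a^2+(1-a)^2)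
    = (1 - 2*(a^2/(a^2+(1-a)^2)))
        * (-S1/a + S0/(1-a) + Real.logb 2 a - Real.logb 2 (1-a))
      + (1 - binEnt (a^2/(a^2+(1-a)^2))) := by
  have ha1' : 0 < 1 - a := by linarith
  have hT : 0 < a^2 + (1-a)^2 := by positivity
  have hq1' : 1 - a^2/(a^2+(1-a)^2) = (1-a)^2/(a^2+(1-a)^2) := by
    field_simp
    ring
  have hlq : Real.logb 2 (a^2/(a^2+(1-a)^2))
      = 2 * Real.logb 2 a - Real.logb 2 (a^2+(1-a)^2) := by
    rw [Real.logb_div (by positivity) hT.ne', Real.logb_pow]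
    push_cast; ring
  have hlq' : Real.logb 2 ((1-a)^2/(a^2+(1-a)^2))
      = 2 * Real.logb 2 (1-a) - Real.logb 2 (a^2+(1-a)^2) := by
    rw [Real.logb_div (by positivity) hT.ne', Real.logb_pow]
    push_cast; ring
  have hlm : Real.logb 2 (2*(a*(1-a)))
      = 1 + Real.logb 2 a + Real.logb 2 (1-a) := by
    rw [Real.logb_mul (by norm_num) (by positivity),
        Real.logb_mul ha0.ne' ha1'.ne', Real.logb_self_eq_one (by norm_num)]
    ring
  unfold binEnt
  rw [hq1', hlq, hlq', hlm]
  field_simp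
  ring

lemma rhs_rec (q : ℝ) (s : ℕ) :
    ∑ i ∈ Finset.range (s+1),
        (∏ j ∈ Finset.range i, (1 - 2*qbar q (s+1-j))) * (1 - binEnt (qbar q (s+1-i)))
      = (1 - 2*qbar q (s+1))
          * ∑ i ∈ Finset.range s,
              (∏ j ∈ Finset.range i, (1 - 2*qbar q (s-j))) * (1 - binEnt (qbar q (s-i)))
        + (1 - binEnt (qbar q (s+1))) := by
  rw [Finset.sum_range_succ']
  congr 1
  · rw [Finset.mul_sum]
    apply Finset.sum_congr rfl
    intro i _
    rw [Finset.prod_range_succ']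
    have h1 : ∀ j, s + 1 - (j+1) = s - j := fun j => by omega
    simp only [h1, Nat.sub_zero]
    ring
  · simp

lemma main_ind {q : ℝ} (hq0 : 0 < q) (hq1 : q < 1) (s : ℕ) :
    -(SS q s 1) / pbar q s + (SS q s 0) / (1 - pbar q s)
      + Real.logb 2 (pbar q s) - Real.logb 2 (1 - pbar q s)
    = ∑ i ∈ Finset.range s,
        (∏ j ∈ Finset.range i, (1 - 2*qbar q (s-j))) * (1 - binEnt (qbar q (s-i))) := by
  induction s with
  | zero =>
      simp only [Finset.range_zero, Finset.sum_empty, SS, pbar, pow_zero, pow_one]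
      norm_num
      have h1 : q ≠ 0 := hq0.ne'
      have h2 : (1:ℝ) - q ≠ 0 := by intro h; apply absurd hq1; linarith [sub_eq_zero.mp h]
      field_simp
      ring
  | succ s ih =>
      have ha0 := pbar_pos hq0 hq1 s
      have ha1 := pbar_lt_one hq0 hq1 s
      have hrho : (1 - 2*q)^(2^(s+1)) = ((1-2*q)^(2^s))^2 := by
        rw [← pow_mul, pow_succ]
      have hA : pbar q (s+1) = 2*(pbar q s * (1 - pbar q s)) := by
        unfold pbar; rw [hrho]; ring
      have hT : 1 - pbar q (s+1) = (pbar q s)^2 + (1 - pbar q s)^2 := by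
        unfold pbar; rw [hrho]; ring
      have hqb : qbar q (s+1) = (pbar q s)^2/((pbar q s)^2 + (1-pbar q s)^2) := by
        unfold qbar; rw [hT]; norm_num
      have hexp : 2^(s+1) - 1 = (2^s - 1) + 2^s := by
        have := Nat.one_le_two_pow (n := s); omega
      have hS1 : SS q (s+1) 1 = 2*(SS q s 1 * (1 - pbar q s) + SS q s 0 * pbar q s) := by
        unfold SS pbar
        rw [hexp, pow_add, pow_succ]
        norm_num
        ring
      have hS0 : SS q (s+1) 0 = 2*(SS q s 0 * (1 - pbar q s) + SS q s 1 * pbar q s) := by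
        unfold SS pbar
        rw [hexp, pow_add, pow_succ]
        norm_num
        ring
      rw [hS1, hS0, hT, hA, rhs_rec, ← ih,
          step_identity (pbar q s) (SS q s 0) (SS q s 1) ha0 ha1, hqb]


/-- First claim of Proposition 1: for `0 < q < 1`, `s ≥ 1`, `N = 2^s`,
`(p̄_s(q)/N)·(H₁^s(q) − H₀^s(q))
  = (p̄_s(q)/N)·∑_{i=0}^{s−1} {∏_{j=1}^{i} (1 − 2q̄_{s−j+1}(q))}·(1 − h(q̄_{s−i}(q)))`. -/
theorem first_round_rate_closed_form (q : ℝ) (hq0 : 0 < q) (hq1 : q < 1) (s : ℕ) (hs : 1 ≤ s) :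
    pbar q s / (2 ^ s : ℝ) * (Hcond q s 1 - Hcond q s 0)
      = pbar q s / (2 ^ s : ℝ) *
          ∑ i ∈ Finset.range s,
            (∏ j ∈ Finset.range i, (1 - 2 * qbar q (s - j))) * (1 - binEnt (qbar q (s - i))) := by
  congr 1
  rw [Hcond_eq hq0 hq1 s 1 (Or.inr rfl), Hcond_eq hq0 hq1 s 0 (Or.inl rfl)]
  simp only [Pib, if_pos, if_neg, Nat.zero_ne_one, if_false, if_true]
  rw [← main_ind hq0 hq1 s]
  ring
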